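/- If γ = ⟨V, E, r⟩ is a finite tree, v ∈ V is an internal vertex (out-degree at least 1) distinct from r, and γ' = ⟨V', E', r', f⟩ is a finite tree with a distinguished leaf f (the foot node) and V ∩ V' = ∅, then the adjunction result γ[v, γ'] — obtained by deleting v, connecting the parent of v to r', and connecting f to all former children of v — is again a finite tree with root r. -/

import Mathlib

attribute [local instance] Classical.propDecidable

/-- A finite tree: a directed graph `⟨V, E, r⟩` with no directed cycles,
root `r` of in-degree 0, every other vertex of in-degree exactly 1,
and every vertex reachable from `r`. -/
def IsFinTree {α : Type*} (V : Finset α) (E : Finset (α × α)) (r : α) : Prop :=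
  r ∈ V ∧
  (∀ e ∈ E, e.1 ∈ V ∧ e.2 ∈ V) ∧
  (∀ v : α, ¬ Relation.TransGen (fun a b => (a, b) ∈ E) v v) ∧
  (∀ e ∈ E, e.2 ≠ r) ∧
  (∀ v ∈ V, v ≠ r → ∃! u : α, (u, v) ∈ E) ∧
  (∀ v ∈ V, Relation.ReflTransGen (fun a b => (a, b) ∈ E) r v)

/-- Acyclicity from unique parents + root with no in-edges + reachability. -/
private lemma acyclic_of_unique_parent {α : Type*} (S : α → α → Prop) (r : α)
    (hroot : ∀ a, ¬ S a r)
    (huniq : ∀ ⦃b a a'⦄, S a b → S a' b → a = a') :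
    ∀ x, Relation.ReflTransGen S r x → ¬ Relation.TransGen S x x := by
  intro x hx
  induction hx with
  | refl =>
    intro h
    obtain ⟨b, -, hb⟩ := Relation.TransGen.tail'_iff.mp h
    exact hroot b hb
  | @tail y x hry hyx ih =>
    intro h
    obtain ⟨z, hxz, hz⟩ := Relation.TransGen.tail'_iff.mp h
    have : z = y := huniq hz hyx
    subst this
    exact ih (Relation.TransGen.head' hyx hxz)

/-- Adjunction: if `γ = ⟨V, E, r⟩` is a finite tree, `v ∈ V` an internal
(out-degree ≥ 1) non-root vertex, and `γ' = ⟨V', E', r', f⟩` a finite tree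
with a distinguished leaf `f` (the foot node), vertex sets disjoint, then the
graph obtained by deleting `v`, connecting the parent of `v` to `r'`, and
connecting `f` to all former children of `v` is again a finite tree with root `r`. -/
theorem adjunction_isFinTree {α : Type*}
    (V V' : Finset α) (E E' : Finset (α × α)) (r r' v f : α)
    (hT : IsFinTree V E r) (hT' : IsFinTree V' E' r')
    (hv : v ∈ V) (hvr : v ≠ r)
    (hinternal : ∃ w : α, (v, w) ∈ E)
    (hf : f ∈ V') (hfleaf : ∀ w : α, (f, w) ∉ E')
    (hdisj : Disjoint V V') :
    IsFinTree ((V ∪ V').erase v)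
      ((E.filter (fun e => e.1 ≠ v ∧ e.2 ≠ v)) ∪ E' ∪
        ((E.filter (fun e => e.2 = v)).image (fun e => (e.1, r'))) ∪
        ((E.filter (fun e => e.1 = v)).image (fun e => (f, e.2)))) r := by
  obtain ⟨hrV, hEV, hacyc, hnoR, hpar, hreach⟩ := hT
  obtain ⟨hr'V', hEV', hacyc', hnoR', hpar', hreach'⟩ := hT'
  have hdl : ∀ x, x ∈ V → x ∈ V' → False := fun x hx hx' =>
    Finset.disjoint_left.mp hdisj hx hx'
  have hvV' : v ∉ V' := fun h => hdl v hv h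
  have hfV : f ∉ V := fun h => hdl f h hf
  have hr'V : r' ∉ V := fun h => hdl r' h hr'V'
  have hrV' : r ∉ V' := fun h => hdl r hrV h
  have hnself : ∀ a, (a, a) ∉ E := fun a h => hacyc a (Relation.TransGen.single h)
  -- membership characterization for the new edge set
  have hmem : ∀ e : α × α,
      (e ∈ (E.filter (fun e => e.1 ≠ v ∧ e.2 ≠ v)) ∪ E' ∪
        ((E.filter (fun e => e.2 = v)).image (fun e => (e.1, r'))) ∪
        ((E.filter (fun e => e.1 = v)).image (fun e => (f, e.2)))) ↔
      ((e ∈ E ∧ e.1 ≠ v ∧ e.2 ≠ v) ∨ e ∈ E' ∨ ((e.1, v) ∈ E ∧ e.2 = r') ∨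
        (e.1 = f ∧ (v, e.2) ∈ E)) := by
    intro e
    simp only [Finset.mem_union, Finset.mem_filter, Finset.mem_image, Prod.ext_iff]
    constructor
    · rintro (((⟨h1, h2⟩ | h) | ⟨a, ⟨haE, hav⟩, h1, h2⟩) | ⟨a, ⟨haE, hav⟩, h1, h2⟩)
      · exact Or.inl ⟨h1, h2⟩
      · exact Or.inr (Or.inl h)
      · refine Or.inr (Or.inr (Or.inl ⟨?_, h2.symm⟩))
        rw [← h1, ← hav]; exact haE
      · refine Or.inr (Or.inr (Or.inr ⟨h1.symm, ?_⟩))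
        rw [← h2, ← hav]; exact haE
    · rintro (⟨h1, h2⟩ | h | ⟨h1, h2⟩ | ⟨h1, h2⟩)
      · exact Or.inl (Or.inl (Or.inl ⟨h1, h2⟩))
      · exact Or.inl (Or.inl (Or.inr h))
      · exact Or.inl (Or.inr ⟨(e.1, v), ⟨h1, rfl⟩, rfl, h2.symm⟩)
      · exact Or.inr ⟨(v, e.2), ⟨h2, rfl⟩, h1.symm, rfl⟩
  set F := (E.filter (fun e => e.1 ≠ v ∧ e.2 ≠ v)) ∪ E' ∪
      ((E.filter (fun e => e.2 = v)).image (fun e => (e.1, r'))) ∪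
      ((E.filter (fun e => e.1 = v)).image (fun e => (f, e.2))) with hFdef
  -- the unique parent of v in the old tree
  obtain ⟨p, hp, hpuniq⟩ := hpar v hv hvr
  have hpv : p ≠ v := fun h => hnself v (h ▸ hp)
  -- root in new vertex set
  have h1 : r ∈ (V ∪ V').erase v :=
    Finset.mem_erase.mpr ⟨Ne.symm hvr, Finset.mem_union_left _ hrV⟩
  -- endpoints
  have h2 : ∀ e ∈ F, e.1 ∈ (V ∪ V').erase v ∧ e.2 ∈ (V ∪ V').erase v := by
    intro e he
    rcases (hmem e).mp he with ⟨h1, h2, h3⟩ | h | ⟨h1, h2⟩ | ⟨h1, h2⟩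
    · exact ⟨Finset.mem_erase.mpr ⟨h2, Finset.mem_union_left _ (hEV e h1).1⟩,
        Finset.mem_erase.mpr ⟨h3, Finset.mem_union_left _ (hEV e h1).2⟩⟩
    · exact ⟨Finset.mem_erase.mpr ⟨fun hh => hvV' (hh ▸ (hEV' e h).1),
        Finset.mem_union_right _ (hEV' e h).1⟩,
        Finset.mem_erase.mpr ⟨fun hh => hvV' (hh ▸ (hEV' e h).2),
        Finset.mem_union_right _ (hEV' e h).2⟩⟩
    · refine ⟨Finset.mem_erase.mpr ⟨fun hh => hnself v (hh ▸ h1),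
        Finset.mem_union_left _ (hEV _ h1).1⟩,
        Finset.mem_erase.mpr ⟨fun hh => hvV' (hh ▸ h2 ▸ hr'V'), ?_⟩⟩
      rw [h2]; exact Finset.mem_union_right _ hr'V'
    · refine ⟨Finset.mem_erase.mpr ⟨fun hh => hvV' (hh ▸ h1 ▸ hf), ?_⟩,
        Finset.mem_erase.mpr ⟨fun hh => hnself v (hh ▸ h2),
        Finset.mem_union_left _ (hEV _ h2).2⟩⟩
      rw [h1]; exact Finset.mem_union_right _ hf
  -- no edge into r
  have h4 : ∀ e ∈ F, e.2 ≠ r := by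
    intro e he
    rcases (hmem e).mp he with ⟨h1, -, -⟩ | h | ⟨-, h2⟩ | ⟨-, h2⟩
    · exact hnoR e h1
    · exact fun hh => hrV' (hh ▸ (hEV' e h).2)
    · exact fun hh => hrV' ((hh ▸ h2 : r = r') ▸ hr'V')
    · exact hnoR (v, e.2) h2
  -- unique parents
  have h5 : ∀ w ∈ (V ∪ V').erase v, w ≠ r → ∃! u : α, (u, w) ∈ F := by
    intro w hw hwr
    rw [Finset.mem_erase, Finset.mem_union] at hw
    obtain ⟨hwv, hwV | hwV'⟩ := hw
    · obtain ⟨u, hu, huu⟩ := hpar w hwV hwr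
      by_cases huv : u = v
      · refine ⟨f, (hmem (f, w)).mpr (Or.inr (Or.inr (Or.inr ⟨rfl, huv ▸ hu⟩))), ?_⟩
        intro z hz
        rcases (hmem (z, w)).mp hz with ⟨h1, h2, -⟩ | h | ⟨-, h2⟩ | ⟨h1, -⟩
        · exact absurd (huu z h1) (fun hh => h2 (hh.trans huv))
        · exact absurd (hEV' _ h).2 (fun hh => hdl w hwV hh)
        · exact absurd (h2 ▸ hwV) hr'V
        · exact h1
      · refine ⟨u, (hmem (u, w)).mpr (Or.inl ⟨hu, huv, hwv⟩), ?_⟩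
        intro z hz
        rcases (hmem (z, w)).mp hz with ⟨h1, -, -⟩ | h | ⟨-, h2⟩ | ⟨-, h2⟩
        · exact huu z h1
        · exact absurd (hEV' _ h).2 (fun hh => hdl w hwV hh)
        · exact absurd (h2 ▸ hwV) hr'V
        · exact absurd (huu v h2).symm huv
    · by_cases hwr' : w = r'
      · subst hwr'
        refine ⟨p, (hmem (p, w)).mpr (Or.inr (Or.inr (Or.inl ⟨hp, rfl⟩))), ?_⟩
        intro z hz
        rcases (hmem (z, w)).mp hz with ⟨h1, -, -⟩ | h | ⟨h1, -⟩ | ⟨-, h2⟩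
        · exact absurd (hEV _ h1).2 hr'V
        · exact absurd rfl (hnoR' _ h)
        · exact hpuniq z h1
        · exact absurd (hEV _ h2).2 hr'V
      · obtain ⟨u, hu, huu⟩ := hpar' w hwV' hwr'
        refine ⟨u, (hmem (u, w)).mpr (Or.inr (Or.inl hu)), ?_⟩
        intro z hz
        rcases (hmem (z, w)).mp hz with ⟨h1, -, -⟩ | h | ⟨-, h2⟩ | ⟨-, h2⟩
        · exact absurd (hEV _ h1).2 (fun hh => hdl w hh hwV')
        · exact huu z h
        · exact absurd hwr' (fun _ => hwr' h2)
        · exact absurd (hEV _ h2).2 (fun hh => hdl w hh hwV')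
  -- lifting E'-reachability
  have hliftE' : ∀ x ∈ V', Relation.ReflTransGen (fun a b => (a, b) ∈ F) r' x := by
    intro x hx
    exact Relation.ReflTransGen.mono (fun a b hab => (hmem (a, b)).mpr (Or.inr (Or.inl hab))) _ _ (hreach' x hx)
  -- key reachability lemma
  have key : ∀ w, Relation.ReflTransGen (fun a b => (a, b) ∈ E) r w →
      (w ≠ v → Relation.ReflTransGen (fun a b => (a, b) ∈ F) r w) ∧
      (w = v → Relation.ReflTransGen (fun a b => (a, b) ∈ F) r r') := by
    intro w hw
    induction hw with
    | refl => exact ⟨fun _ => Relation.ReflTransGen.refl, fun h => absurd h.symm hvr⟩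
    | @tail y w hry hyw ih =>
      constructor
      · intro hwv
        by_cases hyv : y = v
        · have hrf : Relation.ReflTransGen (fun a b => (a, b) ∈ F) r f :=
            (ih.2 hyv).trans (hliftE' f hf)
          exact hrf.tail ((hmem (f, w)).mpr (Or.inr (Or.inr (Or.inr ⟨rfl, hyv ▸ hyw⟩))))
        · exact (ih.1 hyv).tail ((hmem (y, w)).mpr (Or.inl ⟨hyw, hyv, hwv⟩))
      · intro hwv
        have hyv : y ≠ v := fun h => hnself v (by rw [h, hwv] at hyw; exact hyw)
        exact (ih.1 hyv).tail
          ((hmem (y, r')).mpr (Or.inr (Or.inr (Or.inl ⟨hwv ▸ hyw, rfl⟩))))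
  -- reachability in the new graph
  have h6 : ∀ x ∈ (V ∪ V').erase v,
      Relation.ReflTransGen (fun a b => (a, b) ∈ F) r x := by
    intro x hx
    rw [Finset.mem_erase, Finset.mem_union] at hx
    obtain ⟨hxv, hx | hx⟩ := hx
    · exact (key x (hreach x hx)).1 hxv
    · exact ((key v (hreach v hv)).2 rfl).trans (hliftE' x hx)
  -- acyclicity
  have h3 : ∀ x : α, ¬ Relation.TransGen (fun a b => (a, b) ∈ F) x x := by
    intro x hcyc
    obtain ⟨z, -, hz⟩ := Relation.TransGen.tail'_iff.mp hcyc
    have hxW : x ∈ (V ∪ V').erase v := (h2 (z, x) hz).2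
    have huniqS : ∀ ⦃b a a'⦄, (fun a b => (a, b) ∈ F) a b →
        (fun a b => (a, b) ∈ F) a' b → a = a' := by
      intro b a a' ha ha'
      have hbW := (h2 (a, b) ha).2
      have hbr : b ≠ r := h4 (a, b) ha
      obtain ⟨u, -, huu⟩ := h5 b hbW hbr
      rw [huu a ha, huu a' ha']
    exact acyclic_of_unique_parent _ r (fun a ha => h4 (a, r) ha rfl) huniqS x
      (h6 x hxW) hcyc
  exact ⟨h1, h2, h3, h4, h5, h6⟩
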